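/- Let n = 2p with p > 2 prime, and let f be a monomial rotation symmetric Boolean function in n variables generated by x₀x_{a₁}⋯x_{a_{d-1}} whose orbit has exactly p monomials. Then d is even and every monomial of f contains the variables in pairs {x_j, x_{j+p}}; i.e., f has short ANF x₀x_{a₁}⋯x_{a_{g-1}} x_p x_{p+a₁}⋯x_{p+a_{g-1}} with d = 2g and 0 < a₁ < ⋯ < a_{g-1} < p. -/

import Mathlib

/-- For `n = 2p`, `p > 2` prime, if the orbit of the monomial with
index set `S ∋ 0` has exactly `p` monomials, then the degree `|S|` is even and `S`
is invariant under the shift by `p`, i.e. the variables occur in pairs `{x_j, x_{j+p}}`. -/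
theorem stmt18 (p : ℕ) (hp : p.Prime) (hp2 : 2 < p) (S : Finset (Fin (2*p)))
    (hS0 : (⟨0, by omega⟩ : Fin (2*p)) ∈ S)
    (horb : (Finset.univ.image (fun j : Fin (2*p) => S.image (· + j))).card = p) :
    Even S.card ∧ ∀ j ∈ S, j + (⟨p, by omega⟩ : Fin (2*p)) ∈ S := by
  haveI : NeZero (2*p) := ⟨by omega⟩
  set φ : Fin (2*p) → Finset (Fin (2*p)) := fun j => S.image (· + j) with hφ
  have hinj : ∀ b : Fin (2*p), Function.Injective (· + b) := fun b x y h => by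
    simpa using congrArg (· - b) h
  have hφ0 : φ 0 = S := by
    ext a; simp [hφ]
  have hshift : ∀ a b : Fin (2*p), φ (a + b) = (φ a).image (· + b) := by
    intro a b
    simp only [hφ, Finset.image_image]
    congr 1
    funext x
    simp [add_assoc]
  have hfib : ∀ a j : Fin (2*p), φ a = φ j ↔ φ (a - j) = S := by
    intro a j
    have h1 : φ a = (φ (a - j)).image (· + j) := by
      rw [← hshift]; congr 1; abel
    have h2 : φ j = S.image (· + j) := rfl
    rw [h1, h2]
    constructor
    · intro h; exact Finset.image_injective (hinj j) h
    · intro h; rw [h]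
  set H : Finset (Fin (2*p)) := Finset.univ.filter (fun j => φ j = S) with hH
  have hfibcard : ∀ j : Fin (2*p),
      (Finset.univ.filter fun a => φ a = φ j).card = H.card := by
    intro j
    have : (Finset.univ.filter fun a => φ a = φ j) = H.image (· + j) := by
      ext a
      simp only [Finset.mem_filter, Finset.mem_univ, true_and, Finset.mem_image, hH]
      constructor
      · intro h
        exact ⟨a - j, by simp [(hfib a j).1 h], by abel⟩
      · rintro ⟨b, hb, rfl⟩
        rw [hfib]
        simpa using hb
    rw [this, Finset.card_image_of_injective _ (hinj j)]
  have hsum : (2*p : ℕ) = (Finset.univ.image φ).card * H.card := by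
    have h1 := Finset.card_eq_sum_card_fiberwise
      (f := φ) (s := (Finset.univ : Finset (Fin (2*p)))) (t := Finset.univ.image φ)
      (fun x _ => Finset.mem_image_of_mem φ (Finset.mem_univ x))
    rw [Finset.card_univ, Fintype.card_fin] at h1
    calc (2*p : ℕ) = ∑ b ∈ Finset.univ.image φ,
          (Finset.univ.filter fun a => φ a = b).card := h1
      _ = ∑ _b ∈ Finset.univ.image φ, H.card := by
          refine Finset.sum_congr rfl (fun b hb => ?_)
          obtain ⟨j, _, rfl⟩ := Finset.mem_image.mp hb
          exact hfibcard j
      _ = (Finset.univ.image φ).card * H.card := by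
          rw [Finset.sum_const, smul_eq_mul]
  rw [horb] at hsum
  have hppos : 0 < p := by omega
  have hHcard : H.card = 2 :=
    (Nat.eq_of_mul_eq_mul_left hppos (by rw [← hsum]; ring)).symm
  have h0H : (0 : Fin (2*p)) ∈ H := by
    simp only [hH, Finset.mem_filter, Finset.mem_univ, true_and]
    exact hφ0
  obtain ⟨h, hh⟩ : ∃ h, H.erase 0 = {h} := Finset.card_eq_one.mp
    (by rw [Finset.card_erase_of_mem h0H, hHcard])
  have hhH : h ∈ H := Finset.mem_of_mem_erase (hh ▸ Finset.mem_singleton_self h)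
  have hhne : h ≠ 0 := Finset.ne_of_mem_erase (hh ▸ Finset.mem_singleton_self h)
  have hclosed : h + h ∈ H := by
    have h1 : φ h = S := (Finset.mem_filter.mp hhH).2
    have h2 : φ (h + h) = S := by rw [hshift, h1]; exact h1
    simp only [hH, Finset.mem_filter, Finset.mem_univ, true_and]
    exact h2
  have hhh0 : h + h = 0 := by
    by_contra hne
    have : h + h ∈ H.erase 0 := Finset.mem_erase.mpr ⟨hne, hclosed⟩
    rw [hh, Finset.mem_singleton] at this
    exact hhne (by simpa using congrArg (· - h) this)
  have hval : h.val = p := by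
    have hmod : (h.val + h.val) % (2*p) = 0 := by
      have := congrArg Fin.val hhh0
      simpa [Fin.add_def] using this
    have h3 : h.val < 2*p := h.isLt
    have h4 : h.val ≠ 0 := fun hc => hhne (Fin.ext hc)
    rcases Nat.lt_or_ge (h.val + h.val) (2*p) with hc | hc
    · rw [Nat.mod_eq_of_lt hc] at hmod; omega
    · rw [Nat.mod_eq_sub_mod hc, Nat.mod_eq_of_lt (by omega)] at hmod; omega
  set q : Fin (2*p) := ⟨p, by omega⟩ with hq
  have hpH : q ∈ H := by
    have : h = q := Fin.ext hval
    exact this ▸ hhH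
  have hφp : φ q = S := (Finset.mem_filter.mp hpH).2
  have hinv : ∀ j ∈ S, j + q ∈ S := by
    intro j hj
    have h5 : j + q ∈ φ q := Finset.mem_image_of_mem _ hj
    rwa [hφp] at h5
  refine ⟨?_, hinv⟩
  have hqval : q.val = p := rfl
  have hvaladd : ∀ a : Fin (2*p), (a + q).val = (a.val + p) % (2*p) := by
    intro a; rw [Fin.add_def]
  set A := S.filter (fun j => j.val < p) with hA
  set B := S.filter (fun j => ¬ j.val < p) with hB
  have hsplit : A.card + B.card = S.card := Finset.card_filter_add_card_filter_not _
  have hcardAB : B.card = A.card := by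
    apply Finset.card_bij (fun b _ => b + q)
    · intro b hb
      rw [Finset.mem_filter] at hb ⊢
      refine ⟨hinv b hb.1, ?_⟩
      have hlt := b.isLt
      have hge : ¬ b.val < p := hb.2
      have : (b + q).val = b.val + p - 2*p := by
        rw [hvaladd, Nat.mod_eq_sub_mod (by omega), Nat.mod_eq_of_lt (by omega)]
      omega
    · intro x _ y _ hxy
      exact hinj q hxy
    · intro a ha
      rw [Finset.mem_filter] at ha
      refine ⟨a + q, ?_, ?_⟩
      · rw [Finset.mem_filter]
        refine ⟨hinv a ha.1, ?_⟩
        have : (a + q).val = a.val + p := by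
          rw [hvaladd, Nat.mod_eq_of_lt (by omega)]
        omega
      · have hqq : q + q = 0 := by
          apply Fin.ext
          have : (q + q).val = (p + p) % (2*p) := by rw [Fin.add_def]
          rw [this]
          have h2 : p + p = 2*p := by ring
          rw [h2, Nat.mod_self]
          rfl
        rw [add_assoc, hqq, add_zero]
  exact ⟨A.card, by omega⟩
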